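/- The outer independent double Roman domination number of the cycle C_n (n ≥ 3) equals n if n is even, and n + 1 if n is odd. -/

import Mathlib

open SimpleGraph Finset

/-- Outer independent double Roman dominating function. -/
def IsOIDRDF {V : Type*} (G : SimpleGraph V) (f : V → ℕ) : Prop :=
  (∀ v, f v ≤ 3) ∧
  (∀ v, f v = 0 → (∃ u, G.Adj v u ∧ f u = 3) ∨
    (∃ u w, u ≠ w ∧ G.Adj v u ∧ G.Adj v w ∧ f u = 2 ∧ f w = 2)) ∧
  (∀ v, f v = 1 → ∃ u, G.Adj v u ∧ 2 ≤ f u) ∧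
  (∀ u v, G.Adj u v → f u = 0 → f v ≠ 0)

/-- Outer independent double Roman domination number. -/
noncomputable def oidRNum {V : Type*} (G : SimpleGraph V) [Fintype V] : ℕ :=
  sInf {w | ∃ f : V → ℕ, IsOIDRDF G f ∧ w = ∑ v, f v}

/-- Outer independent Roman dominating function. -/
def IsOIRDF {V : Type*} (G : SimpleGraph V) (f : V → ℕ) : Prop :=
  (∀ v, f v ≤ 2) ∧
  (∀ v, f v = 0 → ∃ u, G.Adj v u ∧ f u = 2) ∧
  (∀ u v, G.Adj u v → f u = 0 → f v ≠ 0)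

/-- Outer independent Roman domination number. -/
noncomputable def oiRNum {V : Type*} (G : SimpleGraph V) [Fintype V] : ℕ :=
  sInf {w | ∃ f : V → ℕ, IsOIRDF G f ∧ w = ∑ v, f v}

/-- Vertex cover number. -/
noncomputable def coverNum {V : Type*} (G : SimpleGraph V) [Fintype V] : ℕ :=
  sInf {k | ∃ S : Finset V, S.card = k ∧ ∀ u v, G.Adj u v → u ∈ S ∨ v ∈ S}

/-- Domination number. -/
noncomputable def domNum {V : Type*} (G : SimpleGraph V) [Fintype V] : ℕ :=
  sInf {k | ∃ S : Finset V, S.card = k ∧ ∀ v, v ∉ S → ∃ u ∈ S, G.Adj v u}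

/-- Independence number. -/
noncomputable def indNum {V : Type*} (G : SimpleGraph V) [Fintype V] : ℕ :=
  sSup {k | ∃ S : Finset V, S.card = k ∧ ∀ u ∈ S, ∀ v ∈ S, ¬ G.Adj u v}

/-- Maximum degree. -/
noncomputable def maxDeg {V : Type*} (G : SimpleGraph V) [Fintype V] : ℕ :=
  sSup (Set.range fun v => Nat.card {u | G.Adj v u})

/-- Underlying relation for the corona product. -/
def coronaRel {V W : Type*} (G : SimpleGraph V) (H : SimpleGraph W) :
    (V ⊕ V × W) → (V ⊕ V × W) → Prop
  | Sum.inl u, Sum.inl v => G.Adj u v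
  | Sum.inl u, Sum.inr p => u = p.1
  | Sum.inr p, Sum.inl u => u = p.1
  | Sum.inr p, Sum.inr q => p.1 = q.1 ∧ H.Adj p.2 q.2

/-- The corona product `G ⊙ H`. -/
def corona {V W : Type*} (G : SimpleGraph V) (H : SimpleGraph W) :
    SimpleGraph (V ⊕ V × W) :=
  SimpleGraph.fromRel (coronaRel G H)


section CycleHelpers

open Fin.CommRing

variable {m : ℕ}

private lemma adjIff {u v : Fin (m+3)} :
    (cycleGraph (m+3)).Adj u v ↔ u = v - 1 ∨ u = v + 1 := by
  have h : (m+3) = (m+1)+2 := by ring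
  rw [h] at *
  rw [cycleGraph_adj]
  constructor
  · rintro (h | h)
    · right; rw [← h]; ring
    · left; rw [← h]; ring
  · rintro (h | h)
    · right; rw [h]; ring
    · left; rw [h]; ring

private lemma adjSucc (v : Fin (m+3)) : (cycleGraph (m+3)).Adj v (v+1) := by
  rw [adjIff]; left; ring

private lemma adjPred (v : Fin (m+3)) : (cycleGraph (m+3)).Adj v (v-1) := by
  rw [adjIff]; right; ring

private lemma predNeSucc (v : Fin (m+3)) : v - 1 ≠ v + 1 := by
  intro h
  have h2 : ((2:ℕ) : Fin (m+3)) = 0 := by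
    push_cast
    linear_combination -h
  rw [Fin.natCast_eq_zero] at h2
  have := Nat.le_of_dvd (by norm_num) h2
  omega

private lemma keyIneq {f : Fin (m+3) → ℕ} (hf : IsOIDRDF (cycleGraph (m+3)) f)
    (v : Fin (m+3)) : 4 ≤ f (v-1) + 2 * f v + f (v+1) := by
  obtain ⟨h3, h0, h1, hind⟩ := hf
  rcases Nat.lt_or_ge (f v) 2 with hv | hv
  · interval_cases hfv : f v
    · have hp : f (v-1) ≠ 0 := fun h => hind _ _ (adjPred v).symm h (by simpa using hfv)
      have hs : f (v+1) ≠ 0 := fun h => hind _ _ (adjSucc v).symm h (by simpa using hfv)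
      rcases h0 v hfv with ⟨u, hu, hu3⟩ | ⟨u, w, huw, hu, hw, hu2, hw2⟩
      · rcases adjIff.mp hu.symm with h | h <;> subst h <;> omega
      · rcases adjIff.mp hu.symm with h | h <;> rcases adjIff.mp hw.symm with h' | h' <;>
          subst h <;> first
          | (exact absurd h' (by simpa using huw))
          | (subst h'; omega)
    · obtain ⟨u, hu, hu2⟩ := h1 v hfv
      rcases adjIff.mp hu.symm with h | h <;> subst h <;> omega
  · omega

private lemma sumShift (f : Fin (m+3) → ℕ) :
    ∑ v : Fin (m+3), (f (v-1) + 2 * f v + f (v+1)) = 4 * ∑ v, f v := by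
  rw [Finset.sum_add_distrib, Finset.sum_add_distrib]
  have h1 : ∑ v : Fin (m+3), f (v-1) = ∑ v, f v :=
    Fintype.sum_equiv (Equiv.subRight 1) _ _ (fun v => rfl)
  have h2 : ∑ v : Fin (m+3), f (v+1) = ∑ v, f v :=
    Fintype.sum_equiv (Equiv.addRight 1) _ _ (fun v => rfl)
  rw [h1, h2, ← Finset.mul_sum]
  ring

private lemma lowerBound {f : Fin (m+3) → ℕ} (hf : IsOIDRDF (cycleGraph (m+3)) f) :
    m + 3 ≤ ∑ v, f v := by
  have h : 4 * (m+3) ≤ 4 * ∑ v, f v := by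
    rw [← sumShift f]
    calc 4 * (m+3) = ∑ _v : Fin (m+3), 4 := by simp [mul_comm]
    _ ≤ _ := Finset.sum_le_sum (fun v _ => keyIneq hf v)
  omega

private lemma oddCase {f : Fin (m+3) → ℕ} (hf : IsOIDRDF (cycleGraph (m+3)) f)
    (hodd : ¬ Even (m+3)) : ∑ v, f v ≠ m + 3 := by
  intro hsum
  have heq : ∀ v, f (v-1) + 2 * f v + f (v+1) = 4 := by
    by_contra hc
    push_neg at hc
    obtain ⟨v0, hv0⟩ := hc
    have : (∑ _v : Fin (m+3), 4) < ∑ v : Fin (m+3), (f (v-1) + 2 * f v + f (v+1)) :=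
      Finset.sum_lt_sum (fun v _ => keyIneq hf v)
        ⟨v0, Finset.mem_univ _, lt_of_le_of_ne (keyIneq hf v0) (Ne.symm hv0)⟩
    rw [sumShift f, hsum] at this
    simp at this
    omega
  obtain ⟨h3, h0, h1, hind⟩ := hf
  have no3 : ∀ v, f v ≠ 3 := by
    intro v hv
    have := heq v
    omega
  have two0 : ∀ v, f v = 2 → f (v-1) = 0 ∧ f (v+1) = 0 := by
    intro v hv
    have := heq v
    omega
  have no1 : ∀ v, f v ≠ 1 := by
    intro v hv
    obtain ⟨u, hu, hu2⟩ := h1 v hv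
    have hu2' : f u = 2 := by have := h3 u; have := no3 u; omega
    have := two0 u hu2'
    rcases adjIff.mp hu.symm with h | h
    · have hvu : v = u + 1 := by rw [h]; ring
      rw [hvu] at hv; omega
    · have hvu : v = u - 1 := by rw [h]; ring
      rw [hvu] at hv; omega
  have step : ∀ w : Fin (m+3), f (w+1) = 0 ↔ f w ≠ 0 := by
    intro w
    constructor
    · intro h h'
      exact hind _ _ (adjSucc w).symm h h'
    · intro h
      have h2 : f w = 2 := by have := h3 w; have := no3 w; have := no1 w; omega
      exact (two0 w h2).2
  have alt : ∀ k : ℕ, f ((k : Fin (m+3))) = 0 ↔ (Even k ↔ f (0 : Fin (m+3)) = 0) := by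
    intro k
    induction k with
    | zero => simp
    | succ k ih =>
      have hcast : ((k+1 : ℕ) : Fin (m+3)) = (k : Fin (m+3)) + 1 := by push_cast; ring
      rw [hcast, step, Nat.even_add_one]
      tauto
  have := alt (m+3)
  rw [Fin.natCast_self] at this
  tauto

private lemma valSucc (v : Fin (m+3)) :
    ((v+1 : Fin (m+3)) : ℕ) = if (v:ℕ) = m+2 then 0 else (v:ℕ)+1 := by
  simp [Fin.val_add_one, Fin.ext_iff, Fin.last]

private lemma valPred (v : Fin (m+3)) :
    ((v-1 : Fin (m+3)) : ℕ) = if (v:ℕ) = 0 then m+2 else (v:ℕ)-1 := by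
  rw [Fin.coe_sub_one]
  by_cases h : v = 0
  · subst h; simp
  · have h' : (v:ℕ) ≠ 0 := fun e => h (Fin.ext e)
    simp [h, h']

private def fup : Fin (m+3) → ℕ := fun v => if (v:ℕ) % 2 = 0 then 2 else 0

private lemma fup_isOIDRDF : IsOIDRDF (cycleGraph (m+3)) (fup (m := m)) := by
  refine ⟨fun v => ?_, fun v hv => ?_, fun v hv => ?_, fun u v hadj hu hv => ?_⟩
  · unfold fup; split_ifs <;> omega
  · have hodd : (v:ℕ) % 2 = 1 := by
      unfold fup at hv; split_ifs at hv with h <;> omega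
    right
    refine ⟨v - 1, v + 1, predNeSucc v, adjPred v, adjSucc v, ?_, ?_⟩
    · unfold fup
      rw [valPred]
      have hne : (v:ℕ) ≠ 0 := by omega
      simp [hne]
      omega
    · unfold fup
      rw [valSucc]
      split_ifs with h h2 h3 <;> omega
  · exfalso; unfold fup at hv; split_ifs at hv <;> omega
  · have hu' : (u:ℕ) % 2 = 1 := by unfold fup at hu; split_ifs at hu with h <;> omega
    have hv' : (v:ℕ) % 2 = 1 := by unfold fup at hv; split_ifs at hv with h <;> omega
    rcases adjIff.mp hadj with h | h
    · have hval := valPred v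
      rw [h] at hu'
      rw [hval] at hu'
      split_ifs at hu' <;> omega
    · have hval := valSucc v
      rw [h] at hu'
      rw [hval] at hu'
      split_ifs at hu' <;> omega

private lemma sum_range_alt :
    ∀ N, ∑ i ∈ Finset.range N, (if i % 2 = 0 then 2 else 0) = N + N % 2 := by
  intro N
  induction N with
  | zero => simp
  | succ N ih =>
    rw [Finset.sum_range_succ, ih]
    by_cases h : N % 2 = 0 <;> simp [h] <;> omega

private lemma fup_sum : ∑ v, fup (m := m) v = (m+3) + (m+3) % 2 := by
  unfold fup
  rw [Fin.sum_univ_eq_sum_range (fun i => if i % 2 = 0 then 2 else 0)]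
  exact sum_range_alt (m+3)

end CycleHelpers

theorem stmt1 (n : ℕ) (hn : 3 ≤ n) :
    oidRNum (SimpleGraph.cycleGraph n) = if Even n then n else n + 1 := by
  obtain ⟨m, rfl⟩ : ∃ m, n = m + 3 := ⟨n - 3, by omega⟩
  have hmem : (m+3) + (m+3) % 2 ∈
      {w | ∃ f : Fin (m+3) → ℕ, IsOIDRDF (cycleGraph (m+3)) f ∧ w = ∑ v, f v} :=
    ⟨fup, fup_isOIDRDF, fup_sum.symm⟩
  have hle : oidRNum (cycleGraph (m+3)) ≤ (m+3) + (m+3) % 2 := Nat.sInf_le hmem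
  have hge : (m+3) + (m+3) % 2 ≤ oidRNum (cycleGraph (m+3)) := by
    apply le_csInf ⟨_, hmem⟩
    rintro w ⟨f, hf, rfl⟩
    have h1 := lowerBound hf
    by_cases he : Even (m+3)
    · rw [Nat.even_iff] at he; omega
    · have h2 := oddCase hf he
      rw [Nat.even_iff] at he
      omega
  have hval : oidRNum (cycleGraph (m+3)) = (m+3) + (m+3) % 2 := le_antisymm hle hge
  rw [hval]
  split_ifs with h <;> rw [Nat.even_iff] at h <;> omega
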